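/- (Partial order inexpressibility.) Let L = Bool × Bool with the componentwise order, so L is the four-element diamond lattice with bottom ⊥ = (false,false), top ⊤ = (true,true), and incomparable middle elements a = (false,true) and b = (true,false); meet ⊓ and join ⊔ are componentwise. For probability vectors x, y on L define the series composition (x∗y) k = ∑ over pairs (i,j) with i ⊓ j = k of x i · y j, and the parallel composition (x⊕y) k = ∑ over pairs (i,j) with i ⊔ j = k of x i · y j. (i) If v is a probability vector on L with v ⊥ = 0 and v ⊤ = 0, and v = x∗y for probability vectors x, y, then x = v or y = v; likewise, if v = x⊕y then x = v or y = v. (ii) Consequently, for any real p with 0 < p < 1, the probability vector v with v a = 1−p, v b = p, v ⊥ = v ⊤ = 0 does not lie in the inductive closure under ∗ and ⊕ of the point masses together with any switch set S of probability vectors on L, unless v ∈ S. -/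
import Mathlib

noncomputable section

/-- The diamond lattice: `Bool × Bool` with the componentwise order.
Bottom is `(false, false)`, top is `(true, true)`, and `(false, true)`,
`(true, false)` are the incomparable middle elements. -/
abbrev Diamond := Bool × Bool

/-- Series composition on the lattice: distribution of the meet `⊓` of two
independent states. -/
def lser (x y : Diamond → ℝ) : Diamond → ℝ :=
  fun k => ∑ i, ∑ j, if i ⊓ j = k then x i * y j else 0

/-- Parallel composition on the lattice: distribution of the join `⊔` of two
independent states. -/
def lpar (x y : Diamond → ℝ) : Diamond → ℝ :=
  fun k => ∑ i, ∑ j, if i ⊔ j = k then x i * y j else 0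

/-- A probability vector on the lattice. -/
def IsProbVecL (x : Diamond → ℝ) : Prop :=
  (∀ i, 0 ≤ x i) ∧ ∑ i, x i = 1

/-- The point mass at lattice element `s`. -/
def ldelta (s : Diamond) : Diamond → ℝ := fun i => if i = s then 1 else 0

/-- The inductive closure under series and parallel composition of the point
masses together with a switch set `S`. -/
inductive LClosure (S : Set (Diamond → ℝ)) : (Diamond → ℝ) → Prop
  | point (s : Diamond) : LClosure S (ldelta s)
  | mem {v : Diamond → ℝ} : v ∈ S → LClosure S v
  | series {x y : Diamond → ℝ} : LClosure S x → LClosure S y → LClosure S (lser x y)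
  | parallel {x y : Diamond → ℝ} : LClosure S x → LClosure S y → LClosure S (lpar x y)

lemma ser_key (v x y : Diamond → ℝ) (hx : IsProbVecL x) (hy : IsProbVecL y)
    (hb : v (false,false) = 0) (ht : v (true,true) = 0) (heq : v = lser x y) :
    x = v ∨ y = v := by
  obtain ⟨hxp, hxs⟩ := hx
  obtain ⟨hyp, hys⟩ := hy
  simp only [Fintype.sum_prod_type, Fintype.sum_bool] at hxs hys
  have h1 := congrFun heq (false,false)
  have h2 := congrFun heq (false,true)
  have h3 := congrFun heq (true,false)
  have h4 := congrFun heq (true,true)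
  rw [hb] at h1; rw [ht] at h4
  simp only [lser, Fintype.sum_prod_type, Fintype.sum_bool] at h1 h2 h3 h4
  norm_num at h1 h2 h3 h4
  have n1 := mul_nonneg (hxp (true,true)) (hyp (false,false))
  have n2 := mul_nonneg (hxp (true,false)) (hyp (false,true))
  have n3 := mul_nonneg (hxp (true,false)) (hyp (false,false))
  have n4 := mul_nonneg (hxp (false,true)) (hyp (true,false))
  have n5 := mul_nonneg (hxp (false,true)) (hyp (false,false))
  have n6 := mul_nonneg (hxp (false,false)) (hyp (true,true))
  have n7 := mul_nonneg (hxp (false,false)) (hyp (true,false))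
  have n8 := mul_nonneg (hxp (false,false)) (hyp (false,true))
  have n9 := mul_nonneg (hxp (false,false)) (hyp (false,false))
  have p1 : x (true,true) * y (false,false) = 0 := by linarith
  have p2 : x (true,false) * y (false,true) = 0 := by linarith
  have p3 : x (true,false) * y (false,false) = 0 := by linarith
  have p4 : x (false,true) * y (true,false) = 0 := by linarith
  have p5 : x (false,true) * y (false,false) = 0 := by linarith
  have p6 : x (false,false) * y (true,true) = 0 := by linarith
  have p7 : x (false,false) * y (true,false) = 0 := by linarith
  have p8 : x (false,false) * y (false,true) = 0 := by linarith
  have p9 : x (false,false) * y (false,false) = 0 := by linarith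
  have hx00 : x (false,false) = 0 := by
    linear_combination (-(x (false,false)))*hys + p6 + p7 + p8 + p9
  have hy00 : y (false,false) = 0 := by
    linear_combination (-(y (false,false)))*hxs + p9 + p5 + p3 + p1
  rcases h4 with hx11 | hy11
  · left; funext k; rcases k with ⟨_|_, _|_⟩
    · rw [hb]; exact hx00
    · rw [h2]
      linear_combination (-(x (false,true)))*hys + (-(y (false,true)))*hx11 + p5 + p4
    · rw [h3]
      linear_combination (-(x (true,false)))*hys + (-(y (true,false)))*hx11 + p3 + p2
    · rw [ht]; exact hx11
  · right; funext k; rcases k with ⟨_|_, _|_⟩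
    · rw [hb]; exact hy00
    · rw [h2]
      linear_combination (-(y (false,true)))*hxs + (-(x (false,true)))*hy11 + p8 + p2
    · rw [h3]
      linear_combination (-(y (true,false)))*hxs + (-(x (true,false)))*hy11 + p7 + p4
    · rw [ht]; exact hy11

lemma par_key (v x y : Diamond → ℝ) (hx : IsProbVecL x) (hy : IsProbVecL y)
    (hb : v (false,false) = 0) (ht : v (true,true) = 0) (heq : v = lpar x y) :
    x = v ∨ y = v := by
  obtain ⟨hxp, hxs⟩ := hx
  obtain ⟨hyp, hys⟩ := hy
  simp only [Fintype.sum_prod_type, Fintype.sum_bool] at hxs hys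
  have h1 := congrFun heq (false,false)
  have h2 := congrFun heq (false,true)
  have h3 := congrFun heq (true,false)
  have h4 := congrFun heq (true,true)
  rw [hb] at h1; rw [ht] at h4
  simp only [lpar, Fintype.sum_prod_type, Fintype.sum_bool] at h1 h2 h3 h4
  norm_num at h1 h2 h3 h4
  have n1 := mul_nonneg (hxp (true,true)) (hyp (true,true))
  have n2 := mul_nonneg (hxp (true,true)) (hyp (true,false))
  have n3 := mul_nonneg (hxp (true,true)) (hyp (false,true))
  have n4 := mul_nonneg (hxp (true,true)) (hyp (false,false))
  have n5 := mul_nonneg (hxp (true,false)) (hyp (true,true))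
  have n6 := mul_nonneg (hxp (true,false)) (hyp (false,true))
  have n7 := mul_nonneg (hxp (false,true)) (hyp (true,true))
  have n8 := mul_nonneg (hxp (false,true)) (hyp (true,false))
  have n9 := mul_nonneg (hxp (false,false)) (hyp (true,true))
  have q1 : x (true,true) * y (true,true) = 0 := by linarith
  have q2 : x (true,true) * y (true,false) = 0 := by linarith
  have q3 : x (true,true) * y (false,true) = 0 := by linarith
  have q4 : x (true,true) * y (false,false) = 0 := by linarith
  have q5 : x (true,false) * y (true,true) = 0 := by linarith
  have q6 : x (true,false) * y (false,true) = 0 := by linarith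
  have q7 : x (false,true) * y (true,true) = 0 := by linarith
  have q8 : x (false,true) * y (true,false) = 0 := by linarith
  have q9 : x (false,false) * y (true,true) = 0 := by linarith
  have hx11 : x (true,true) = 0 := by
    linear_combination (-(x (true,true)))*hys + q1 + q2 + q3 + q4
  have hy11 : y (true,true) = 0 := by
    linear_combination (-(y (true,true)))*hxs + q1 + q5 + q7 + q9
  rcases h1 with hx00 | hy00
  · left; funext k; rcases k with ⟨_|_, _|_⟩
    · rw [hb]; exact hx00
    · rw [h2]
      linear_combination (-(x (false,true)))*hys + (-(y (false,true)))*hx00 + q7 + q8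
    · rw [h3]
      linear_combination (-(x (true,false)))*hys + (-(y (true,false)))*hx00 + q5 + q6
    · rw [ht]; exact hx11
  · right; funext k; rcases k with ⟨_|_, _|_⟩
    · rw [hb]; exact hy00
    · rw [h2]
      linear_combination (-(y (false,true)))*hxs + (-(x (false,true)))*hy00 + q3 + q6
    · rw [h3]
      linear_combination (-(y (true,false)))*hxs + (-(x (true,false)))*hy00 + q2 + q8
    · rw [ht]; exact hy11

lemma lser_prob {x y : Diamond → ℝ} (hx : IsProbVecL x) (hy : IsProbVecL y) :
    IsProbVecL (lser x y) := by
  obtain ⟨hxp, hxs⟩ := hx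
  obtain ⟨hyp, hys⟩ := hy
  constructor
  · intro k
    apply Finset.sum_nonneg; intro i _
    apply Finset.sum_nonneg; intro j _
    split
    · exact mul_nonneg (hxp i) (hyp j)
    · exact le_refl 0
  · simp only [Fintype.sum_prod_type, Fintype.sum_bool] at hxs hys
    simp only [lser, Fintype.sum_prod_type, Fintype.sum_bool]
    norm_num
    linear_combination
      (x (true,true) + x (true,false) + (x (false,true) + x (false,false)))*hys + hxs

lemma lpar_prob {x y : Diamond → ℝ} (hx : IsProbVecL x) (hy : IsProbVecL y) :
    IsProbVecL (lpar x y) := by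
  obtain ⟨hxp, hxs⟩ := hx
  obtain ⟨hyp, hys⟩ := hy
  constructor
  · intro k
    apply Finset.sum_nonneg; intro i _
    apply Finset.sum_nonneg; intro j _
    split
    · exact mul_nonneg (hxp i) (hyp j)
    · exact le_refl 0
  · simp only [Fintype.sum_prod_type, Fintype.sum_bool] at hxs hys
    simp only [lpar, Fintype.sum_prod_type, Fintype.sum_bool]
    norm_num
    linear_combination
      (x (true,true) + x (true,false) + (x (false,true) + x (false,false)))*hys + hxs

lemma ldelta_prob (s : Diamond) : IsProbVecL (ldelta s) := by
  constructor
  · intro i; unfold ldelta; split <;> norm_num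
  · simp [ldelta, Finset.sum_ite_eq']

lemma closure_prob {S : Set (Diamond → ℝ)} (hS : ∀ w ∈ S, IsProbVecL w)
    {w : Diamond → ℝ} (h : LClosure S w) : IsProbVecL w := by
  induction h with
  | point s => exact ldelta_prob s
  | mem hm => exact hS _ hm
  | series _ _ ihx ihy => exact lser_prob ihx ihy
  | parallel _ _ ihx ihy => exact lpar_prob ihx ihy

theorem partial_order_inexpressibility :
    (∀ v x y : Diamond → ℝ, IsProbVecL v → IsProbVecL x → IsProbVecL y →
      v (false, false) = 0 → v (true, true) = 0 →
      ((v = lser x y → x = v ∨ y = v) ∧ (v = lpar x y → x = v ∨ y = v))) ∧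
    (∀ S : Set (Diamond → ℝ), (∀ w ∈ S, IsProbVecL w) →
      ∀ p : ℝ, 0 < p → p < 1 →
      ∀ v : Diamond → ℝ,
        v = (fun i => if i = (false, true) then 1 - p
              else if i = (true, false) then p else 0) →
        LClosure S v → v ∈ S) := by
  constructor
  · intro v x y _ hx hy hb ht
    exact ⟨fun h => ser_key v x y hx hy hb ht h, fun h => par_key v x y hx hy hb ht h⟩
  · intro S hS p hp0 hp1 v hv hcl
    have hb : v (false,false) = 0 := by rw [hv]; norm_num
    have ht : v (true,true) = 0 := by rw [hv]; norm_num
    have ha : v (false,true) = 1 - p := by rw [hv]; norm_num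
    have hb2 : v (true,false) = p := by rw [hv]; norm_num
    have hvprob : IsProbVecL v := by
      constructor
      · intro i; rw [hv]; rcases i with ⟨_|_,_|_⟩ <;> norm_num <;> linarith
      · rw [hv]; simp only [Fintype.sum_prod_type, Fintype.sum_bool]; norm_num
    have key : ∀ w, LClosure S w → w = v → v ∈ S := by
      intro w hw
      induction hw with
      | point s =>
        intro he
        exfalso
        have e1 := congrFun he (false,true)
        have e2 := congrFun he (true,false)
        rw [ha] at e1; rw [hb2] at e2
        unfold ldelta at e1 e2
        rcases s with ⟨_|_,_|_⟩ <;> norm_num at e1 e2 <;> linarith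
      | mem hm => intro he; exact he ▸ hm
      | series hcx hcy ihx ihy =>
        intro he
        rcases ser_key v _ _ (closure_prob hS hcx) (closure_prob hS hcy) hb ht he.symm
          with h | h
        · exact ihx h
        · exact ihy h
      | parallel hcx hcy ihx ihy =>
        intro he
        rcases par_key v _ _ (closure_prob hS hcx) (closure_prob hS hcy) hb ht he.symm
          with h | h
        · exact ihx h
        · exact ihy h
    exact key v hcl rfl
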